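/- Let q ∈ (1, ∞). Assume L : ℝ → ℝ is uniformly convex, i.e. there exists θ > 0 such that L(λu + (1−λ)v) ≤ λL(u) + (1−λ)L(v) − θλ(1−λ)(u−v)² for all u, v ∈ ℝ and λ ∈ [0,1]; G : (0, ∞) → ℝ is such that s ↦ G(δ/s) is convex on (0, ∞); and V : ℝ × [0, T] → ℝ is continuous with x ↦ V(x, t) concave for each t. Let x and y be two admissible curves (of the form x(t) = x⁰ + ∫₀ᵗ v with v ∈ L^q, ordered components, prescribed equal initial point x⁰ and equal terminal point x^T) that both minimize, with finite value, the functional J̃(x) = ∫₀^T (1/N) Σ_{i=1}^{N} [L(ẋᵢ(s)) − V(xᵢ(s), s)] ds + ∫₀^T (1/N) Σ_{i=2}^{N} G(δ/(xᵢ(s) − x_{i−1}(s))) ds over this admissible class. Then x(t) = y(t) for all t ∈ [0, T]. -/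

import Mathlib

open MeasureTheory Set Finset Classical

lemma aux_convex_minorant (L : ℝ → ℝ) (hL : ConvexOn ℝ Set.univ L) :
    ∃ C : ℝ, 0 ≤ C ∧ ∀ u : ℝ, L 0 - C * |u| ≤ L u := by
  refine ⟨|L 1 - L 0| + |L 0 - L (-1)|, by positivity, fun u => ?_⟩
  rcases lt_trichotomy u 0 with hu | hu | hu
  · have h1 : (L 0 - L u) / (0 - u) ≤ (L 1 - L 0) / (1 - 0) :=
      hL.slope_mono_adjacent (mem_univ u) (mem_univ (1:ℝ)) hu one_pos
    rw [abs_of_neg hu]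
    have h2 : 0 < -u := by linarith
    rw [div_le_div_iff₀ (by linarith) (by norm_num)] at h1
    have := le_abs_self (L 1 - L 0)
    have := neg_abs_le (L 1 - L 0)
    have := abs_nonneg (L 0 - L (-1))
    nlinarith
  · subst hu
    simp only [abs_zero, mul_zero, sub_zero, le_refl]
  · have h1 : (L 0 - L (-1)) / (0 - (-1)) ≤ (L u - L 0) / (u - 0) :=
      hL.slope_mono_adjacent (mem_univ (-1:ℝ)) (mem_univ u) (by norm_num) hu
    rw [abs_of_pos hu]
    rw [div_le_div_iff₀ (by norm_num) (by linarith)] at h1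
    have := le_abs_self (L 0 - L (-1))
    have := neg_abs_le (L 0 - L (-1))
    have := abs_nonneg (L 1 - L 0)
    nlinarith

lemma aux_convexOn_lb (g : ℝ → ℝ) (hg : ConvexOn ℝ (Set.Ioi 0) g) (M : ℝ) :
    ∃ B : ℝ, ∀ s ∈ Set.Ioc (0:ℝ) M, B ≤ g s := by
  refine ⟨g 2 - 2 * |g 3 - g 2| - |g 2 - g 1| * (|M| + 2), fun s hs => ?_⟩
  have hs0 : (0:ℝ) < s := hs.1
  have hsM : s ≤ M := hs.2
  have hM : M ≤ |M| := le_abs_self M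
  rcases lt_trichotomy s 2 with h2 | h2 | h2
  · have h := hg.slope_mono_adjacent (mem_Ioi.mpr hs0) (mem_Ioi.mpr (by norm_num : (0:ℝ) < 3)) h2 (by norm_num)
    rw [div_le_div_iff₀ (by linarith) (by norm_num)] at h
    have := le_abs_self (g 3 - g 2)
    have := neg_abs_le (g 3 - g 2)
    have := abs_nonneg (g 2 - g 1)
    have := abs_nonneg M
    nlinarith
  · subst h2
    have := abs_nonneg (g 3 - g 2)
    have := abs_nonneg (g 2 - g 1)
    have := abs_nonneg M
    nlinarith
  · have h := hg.slope_mono_adjacent (mem_Ioi.mpr (by norm_num : (0:ℝ) < 1)) (mem_Ioi.mpr hs0) (by norm_num) h2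
    rw [div_le_div_iff₀ (by norm_num) (by linarith)] at h
    have := le_abs_self (g 2 - g 1)
    have := neg_abs_le (g 2 - g 1)
    have := abs_nonneg (g 3 - g 2)
    nlinarith

/-- The extended-real-valued discrete utility functional
`J̃(x,v) = ∫₀ᵀ [(1/N) Σᵢ (L(vᵢ) − V(xᵢ,s)) + (1/N) Σ_{i≥2} G(δ/(xᵢ−x_{i−1}))] ds`,
set to `+∞` unless the integrand is integrable and the gaps are a.e. positive
(the `G`-terms are `+∞` at collisions). -/
noncomputable def Jt (N : ℕ) (T : ℝ) (L G : ℝ → ℝ) (V : ℝ → ℝ → ℝ)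
    (x : ℝ → ℕ → ℝ) (v : ℝ → ℕ → ℝ) : EReal :=
  if IntegrableOn (fun s =>
        (1 / (N:ℝ)) * ∑ i ∈ Finset.Icc 1 N, (L (v s i) - V (x s i) s)
        + (1 / (N:ℝ)) * ∑ i ∈ Finset.Icc 2 N, G (((1:ℝ)/N) / (x s i - x s (i - 1))))
        (Set.Icc 0 T)
      ∧ (∀ᵐ s ∂(volume.restrict (Set.Icc (0:ℝ) T)),
          ∀ i ∈ Finset.Icc 2 N, x s (i - 1) < x s i)
  then ((∫ s in Set.Icc (0:ℝ) T,
        ((1 / (N:ℝ)) * ∑ i ∈ Finset.Icc 1 N, (L (v s i) - V (x s i) s)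
        + (1 / (N:ℝ)) * ∑ i ∈ Finset.Icc 2 N, G (((1:ℝ)/N) / (x s i - x s (i - 1))))) : ℝ)
  else ⊤

lemma Jt_eq_of (N : ℕ) (T : ℝ) (L G : ℝ → ℝ) (V : ℝ → ℝ → ℝ) (x v : ℝ → ℕ → ℝ)
    (h1 : IntegrableOn (fun s =>
        (1 / (N:ℝ)) * ∑ i ∈ Finset.Icc 1 N, (L (v s i) - V (x s i) s)
        + (1 / (N:ℝ)) * ∑ i ∈ Finset.Icc 2 N, G (((1:ℝ)/N) / (x s i - x s (i - 1))))
        (Set.Icc 0 T))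
    (h2 : ∀ᵐ s ∂(volume.restrict (Set.Icc (0:ℝ) T)),
        ∀ i ∈ Finset.Icc 2 N, x s (i - 1) < x s i) :
    Jt N T L G V x v = ((∫ s in Set.Icc (0:ℝ) T,
        ((1 / (N:ℝ)) * ∑ i ∈ Finset.Icc 1 N, (L (v s i) - V (x s i) s)
        + (1 / (N:ℝ)) * ∑ i ∈ Finset.Icc 2 N, G (((1:ℝ)/N) / (x s i - x s (i - 1)))) : ℝ) : EReal) := by
  unfold Jt
  rw [if_pos ⟨h1, h2⟩]

lemma Jt_cond (N : ℕ) (T : ℝ) (L G : ℝ → ℝ) (V : ℝ → ℝ → ℝ) (x v : ℝ → ℕ → ℝ)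
    (hfin : Jt N T L G V x v ≠ ⊤) :
    IntegrableOn (fun s =>
        (1 / (N:ℝ)) * ∑ i ∈ Finset.Icc 1 N, (L (v s i) - V (x s i) s)
        + (1 / (N:ℝ)) * ∑ i ∈ Finset.Icc 2 N, G (((1:ℝ)/N) / (x s i - x s (i - 1))))
        (Set.Icc 0 T)
      ∧ (∀ᵐ s ∂(volume.restrict (Set.Icc (0:ℝ) T)),
          ∀ i ∈ Finset.Icc 2 N, x s (i - 1) < x s i) := by
  by_contra h
  exact hfin (by unfold Jt; rw [if_neg h])

/-- The admissible class: curves `xᵢ(t) = xᵢ⁰ + ∫₀ᵗ vᵢ(s) ds` with `v ∈ L^q([0,T];ℝ^N)`,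
terminal condition `x(T) = x^T`, and ordered components on `[0,T]`. -/
def Adm (N : ℕ) (T q : ℝ) (x0 xT : ℕ → ℝ)
    (x : ℝ → ℕ → ℝ) (v : ℝ → ℕ → ℝ) : Prop :=
  (∀ i ∈ Finset.Icc 1 N, MemLp (fun s => v s i) (ENNReal.ofReal q)
      (volume.restrict (Set.Icc (0:ℝ) T)))
  ∧ (∀ i ∈ Finset.Icc 1 N, ∀ t ∈ Set.Icc (0:ℝ) T,
      x t i = x0 i + ∫ s in (0:ℝ)..t, v s i)
  ∧ (∀ i ∈ Finset.Icc 1 N, x T i = xT i)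
  ∧ (∀ t ∈ Set.Icc (0:ℝ) T, ∀ i ∈ Finset.Icc 2 N, x t (i - 1) ≤ x t i)

set_option maxHeartbeats 1000000 in
/-- Uniqueness of minimizers of the discrete utility functional: if `L` is uniformly
convex, `s ↦ G(δ/s)` is convex, and `V` is continuous and concave in its first variable,
then any two admissible minimizers with finite value coincide on `[0,T]`. -/
theorem stmt_5
    (N : ℕ) (hN : 2 ≤ N) (T : ℝ) (hT : 0 < T)
    (q θ : ℝ) (hq : 1 < q) (hθ : 0 < θ)
    (L : ℝ → ℝ)
    (hLuc : ∀ u v : ℝ, ∀ l : ℝ, 0 ≤ l → l ≤ 1 →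
      L (l * u + (1 - l) * v) ≤ l * L u + (1 - l) * L v - θ * l * (1 - l) * (u - v) ^ 2)
    (G : ℝ → ℝ)
    (hGconv : ConvexOn ℝ (Set.Ioi 0) (fun s => G (((1:ℝ)/N) / s)))
    (V : ℝ → ℝ → ℝ)
    (hVc : ContinuousOn (fun p : ℝ × ℝ => V p.1 p.2) (Set.univ ×ˢ Set.Icc 0 T))
    (hVconc : ∀ t ∈ Set.Icc (0:ℝ) T, ConcaveOn ℝ Set.univ (fun z => V z t))
    (x0 xT : ℕ → ℝ)
    (x v y w : ℝ → ℕ → ℝ)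
    (hx : Adm N T q x0 xT x v) (hy : Adm N T q x0 xT y w)
    (hxfin : Jt N T L G V x v ≠ ⊤) (hyfin : Jt N T L G V y w ≠ ⊤)
    (hxmin : ∀ z u, Adm N T q x0 xT z u → Jt N T L G V x v ≤ Jt N T L G V z u)
    (hymin : ∀ z u, Adm N T q x0 xT z u → Jt N T L G V y w ≤ Jt N T L G V z u) :
    ∀ t ∈ Set.Icc (0:ℝ) T, ∀ i ∈ Finset.Icc 1 N, x t i = y t i := by
  classical
  have hN0 : (0:ℝ) < (N:ℝ) := by
    have : 0 < N := by omega
    exact_mod_cast this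
  obtain ⟨hxq, hxeq, hxT, hxord⟩ := id hx
  obtain ⟨hyq, hyeq, hyT, hyord⟩ := id hy
  haveI : Fact (volume (Set.Icc (0:ℝ) T) < ⊤) := ⟨measure_Icc_lt_top⟩
  have hmem1 : ∀ i ∈ Finset.Icc 2 N, i ∈ Finset.Icc 1 N := by
    intro i hi; simp only [Finset.mem_Icc] at *; omega
  have hmem1' : ∀ i ∈ Finset.Icc 2 N, i - 1 ∈ Finset.Icc 1 N := by
    intro i hi; simp only [Finset.mem_Icc] at *; omega
  -- integrability and measurability of the velocities
  have h1q : (1:ENNReal) ≤ ENNReal.ofReal q := ENNReal.one_le_ofReal.mpr hq.le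
  have hvI : ∀ i ∈ Finset.Icc 1 N, IntegrableOn (fun s => v s i) (Set.Icc 0 T) :=
    fun i hi => (hxq i hi).integrable h1q
  have hwI : ∀ i ∈ Finset.Icc 1 N, IntegrableOn (fun s => w s i) (Set.Icc 0 T) :=
    fun i hi => (hyq i hi).integrable h1q
  have hvm : ∀ i ∈ Finset.Icc 1 N,
      AEStronglyMeasurable (fun s => v s i) (volume.restrict (Set.Icc (0:ℝ) T)) :=
    fun i hi => (hxq i hi).1
  have hwm : ∀ i ∈ Finset.Icc 1 N,
      AEStronglyMeasurable (fun s => w s i) (volume.restrict (Set.Icc (0:ℝ) T)) :=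
    fun i hi => (hyq i hi).1
  -- continuity of the curves
  have hcurve : ∀ (c : ℝ → ℕ → ℝ) (d : ℝ → ℕ → ℝ),
      (∀ i ∈ Finset.Icc 1 N, IntegrableOn (fun s => d s i) (Set.Icc 0 T)) →
      (∀ i ∈ Finset.Icc 1 N, ∀ t ∈ Set.Icc (0:ℝ) T, c t i = x0 i + ∫ s in (0:ℝ)..t, d s i) →
      ∀ i ∈ Finset.Icc 1 N, ContinuousOn (fun t => c t i) (Set.Icc 0 T) := by
    intro c d hdI hceq i hi
    have h0 : ContinuousOn (fun t => ∫ s in (0:ℝ)..t, d s i) (Set.uIcc 0 T) :=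
      intervalIntegral.continuousOn_primitive_interval
        (by rw [Set.uIcc_of_le hT.le]; exact hdI i hi)
    rw [Set.uIcc_of_le hT.le] at h0
    exact (continuousOn_const.add h0).congr (fun t ht => hceq i hi t ht)
  have hxc := hcurve x v hvI hxeq
  have hyc := hcurve y w hwI hyeq
  -- conditions from finiteness
  obtain ⟨hxint, hxgap⟩ := Jt_cond N T L G V x v hxfin
  obtain ⟨hyint, hygap⟩ := Jt_cond N T L G V y w hyfin
  -- midpoint curve
  obtain ⟨z, hzdef⟩ : ∃ z : ℝ → ℕ → ℝ, z = fun t j => (x t j + y t j) / 2 := ⟨_, rfl⟩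
  obtain ⟨u, hudef⟩ : ∃ u : ℝ → ℕ → ℝ, u = fun s j => (v s j + w s j) / 2 := ⟨_, rfl⟩
  have hzc : ∀ i ∈ Finset.Icc 1 N, ContinuousOn (fun t => z t i) (Set.Icc 0 T) := by
    intro i hi
    simp only [hzdef]
    exact ((hxc i hi).add (hyc i hi)).div_const 2
  have hum : ∀ i ∈ Finset.Icc 1 N,
      AEStronglyMeasurable (fun s => u s i) (volume.restrict (Set.Icc (0:ℝ) T)) := by
    intro i hi
    exact (((hvm i hi).add (hwm i hi)).mul_const ((2:ℝ)⁻¹)).congr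
      (Filter.Eventually.of_forall fun s => by simp only [Pi.add_apply, hudef]; ring)
  have huI : ∀ i ∈ Finset.Icc 1 N, IntegrableOn (fun s => u s i) (Set.Icc 0 T) := by
    intro i hi
    simp only [hudef]
    exact ((hvI i hi).add (hwI i hi)).div_const 2
  -- admissibility of the midpoint
  have hintv : ∀ (d : ℝ → ℕ → ℝ), (∀ i ∈ Finset.Icc 1 N, IntegrableOn (fun s => d s i) (Set.Icc 0 T)) →
      ∀ i ∈ Finset.Icc 1 N, ∀ t ∈ Set.Icc (0:ℝ) T,
      IntervalIntegrable (fun s => d s i) volume 0 t := by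
    intro d hdI i hi t ht
    rw [intervalIntegrable_iff]
    apply (hdI i hi).mono_set
    rw [Set.uIoc_of_le ht.1]
    exact fun s hs => ⟨hs.1.le, hs.2.trans ht.2⟩
  have hadm : Adm N T q x0 xT z u := by
    refine ⟨?_, ?_, ?_, ?_⟩
    · intro i hi
      have h := ((hxq i hi).add (hyq i hi)).const_mul ((2:ℝ)⁻¹)
      have heq : (fun s => u s i) = fun s => (2:ℝ)⁻¹ * (v s i + w s i) := by
        funext s; simp only [hudef]; ring
      rw [heq]
      exact h
    · intro i hi t ht
      have hsum : ∫ s in (0:ℝ)..t, u s i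
          = ((∫ s in (0:ℝ)..t, v s i) + ∫ s in (0:ℝ)..t, w s i) / 2 := by
        simp only [hudef]
        rw [intervalIntegral.integral_div, intervalIntegral.integral_add
          (hintv v hvI i hi t ht) (hintv w hwI i hi t ht)]
      simp only [hzdef]
      rw [hxeq i hi t ht, hyeq i hi t ht, hsum]
      ring
    · intro i hi
      have h1 := hxT i hi
      have h2 := hyT i hi
      simp only [hzdef]
      rw [h1, h2]; ring
    · intro t ht i hi
      have h1 := hxord t ht i hi
      have h2 := hyord t ht i hi
      simp only [hzdef]
      linarith
  
  -- a.e. positivity of midpoint gaps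
  have hzgap : ∀ᵐ s ∂(volume.restrict (Set.Icc (0:ℝ) T)),
      ∀ i ∈ Finset.Icc 2 N, z s (i - 1) < z s i := by
    filter_upwards [hxgap, hygap] with s h1 h2 i hi
    have := h1 i hi
    have := h2 i hi
    simp only [hzdef]
    linarith
  -- convexity consequences for L
  have hLconv : ConvexOn ℝ Set.univ L := by
    refine ⟨convex_univ, fun a _ b _ la lb hla hlb hab => ?_⟩
    have h := hLuc a b la hla (by linarith)
    have h2 : (1:ℝ) - la = lb := by linarith
    rw [h2] at h
    simp only [smul_eq_mul]
    nlinarith [sq_nonneg (a - b), mul_nonneg (mul_nonneg hθ.le hla) hlb]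
  obtain ⟨C, hC0, hCmin⟩ := aux_convex_minorant L hLconv
  have hLcont : Continuous L := by
    rw [← continuousOn_univ]
    exact ConvexOn.continuousOn isOpen_univ hLconv
  have hgcont : ContinuousOn (fun r => G (((1:ℝ)/N) / r)) (Set.Ioi 0) :=
    ConvexOn.continuousOn isOpen_Ioi hGconv
  have hVcomp : ∀ c : ℝ → ℝ, ContinuousOn c (Set.Icc 0 T) →
      ContinuousOn (fun s => V (c s) s) (Set.Icc 0 T) := by
    intro c hc
    exact hVc.comp (hc.prodMk continuousOn_id) (fun s hs => ⟨trivial, hs⟩)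
  -- gap continuity and lower bounds for the G-terms
  have hgapc : ∀ i ∈ Finset.Icc 2 N,
      ContinuousOn (fun s => z s i - z s (i - 1)) (Set.Icc 0 T) :=
    fun i hi => (hzc i (hmem1 i hi)).sub (hzc (i - 1) (hmem1' i hi))
  have hBex : ∀ i ∈ Finset.Icc 2 N, ∃ B : ℝ, ∀ s ∈ Set.Icc (0:ℝ) T,
      0 < z s i - z s (i - 1) → B ≤ G (((1:ℝ)/N) / (z s i - z s (i - 1))) := by
    intro i hi
    obtain ⟨M, hM⟩ := (isCompact_Icc.image_of_continuousOn (hgapc i hi)).bddAbove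
    obtain ⟨B, hB⟩ := aux_convexOn_lb _ hGconv M
    exact ⟨B, fun s hs hpos => hB _ ⟨hpos, hM (Set.mem_image_of_mem _ hs)⟩⟩
  choose! B hB using hBex
  -- measurability of the G-terms of the midpoint
  have hGzm : ∀ i ∈ Finset.Icc 2 N, AEStronglyMeasurable
      (fun s => G (((1:ℝ)/N) / (z s i - z s (i - 1))))
      (volume.restrict (Set.Icc (0:ℝ) T)) := by
    intro i hi
    refine aestronglyMeasurable_of_tendsto_ae (u := Filter.atTop (α := ℕ))
      (f := fun n s => G (((1:ℝ)/N) / max (z s i - z s (i - 1)) (1/(n+1)))) ?_ ?_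
    · intro n
      have hcont : ContinuousOn
          (fun s => G (((1:ℝ)/N) / max (z s i - z s (i - 1)) (1/(n+1:ℝ)))) (Set.Icc 0 T) := by
        refine hgcont.comp ((hgapc i hi).sup continuousOn_const) ?_
        intro s _
        exact mem_Ioi.mpr (lt_max_of_lt_right (by positivity))
      exact hcont.aestronglyMeasurable measurableSet_Icc
    · filter_upwards [hzgap] with s hs
      have hpos : 0 < z s i - z s (i - 1) := by
        have := hs i hi; linarith
      obtain ⟨n0, hn0⟩ := exists_nat_one_div_lt hpos
      refine tendsto_const_nhds.congr' ?_
      filter_upwards [Filter.eventually_ge_atTop n0] with n hn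
      have h1 : (1:ℝ)/(n+1) ≤ 1/(n0+1) := by
        apply one_div_le_one_div_of_le (by positivity)
        exact_mod_cast by omega
      rw [max_eq_left (by linarith [hn0])]
  
  -- remaining measurability for the midpoint integrand
  have hLum : ∀ i ∈ Finset.Icc 1 N, AEStronglyMeasurable (fun s => L (u s i))
      (volume.restrict (Set.Icc (0:ℝ) T)) :=
    fun i hi => hLcont.comp_aestronglyMeasurable (hum i hi)
  have hVzm : ∀ i ∈ Finset.Icc 1 N, AEStronglyMeasurable (fun s => V (z s i) s)
      (volume.restrict (Set.Icc (0:ℝ) T)) :=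
    fun i hi => (hVcomp _ (hzc i hi)).aestronglyMeasurable measurableSet_Icc
  have hFIzm : AEStronglyMeasurable (fun s =>
      (1 / (N:ℝ)) * ∑ i ∈ Finset.Icc 1 N, (L (u s i) - V (z s i) s)
      + (1 / (N:ℝ)) * ∑ i ∈ Finset.Icc 2 N, G (((1:ℝ)/N) / (z s i - z s (i - 1))))
      (volume.restrict (Set.Icc (0:ℝ) T)) := by
    apply AEStronglyMeasurable.add
    · exact (Finset.aestronglyMeasurable_fun_sum _
        (fun i hi => (hLum i hi).sub (hVzm i hi))).const_mul _
    · exact (Finset.aestronglyMeasurable_fun_sum _ (fun i hi => hGzm i hi)).const_mul _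
  -- the quantitative convexity defect
  obtain ⟨Q, hQdef⟩ : ∃ Q : ℝ → ℝ, Q = fun s => ∑ i ∈ Finset.Icc 1 N, (v s i - w s i) ^ 2 := ⟨_, rfl⟩
  have hQ0 : ∀ s, 0 ≤ Q s := fun s => by rw [hQdef]; exact Finset.sum_nonneg fun i _ => sq_nonneg _
  have hQm : AEStronglyMeasurable Q (volume.restrict (Set.Icc (0:ℝ) T)) := by
    rw [hQdef]
    apply Finset.aestronglyMeasurable_fun_sum
    intro i hi
    have h := ((hvm i hi).sub (hwm i hi)).mul ((hvm i hi).sub (hwm i hi))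
    exact h.congr (Filter.Eventually.of_forall fun s => by simp only [Pi.mul_apply, Pi.sub_apply]; ring)
  obtain ⟨c, hcdef⟩ : ∃ c : ℝ, c = θ / (4 * (N:ℝ)) := ⟨_, rfl⟩
  have hc : 0 < c := by rw [hcdef]; positivity
  -- the key pointwise inequality
  have key : ∀ᵐ s ∂(volume.restrict (Set.Icc (0:ℝ) T)),
      ((1 / (N:ℝ)) * ∑ i ∈ Finset.Icc 1 N, (L (u s i) - V (z s i) s)
        + (1 / (N:ℝ)) * ∑ i ∈ Finset.Icc 2 N, G (((1:ℝ)/N) / (z s i - z s (i - 1)))) + c * Q s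
      ≤ (1/2) * ((1 / (N:ℝ)) * ∑ i ∈ Finset.Icc 1 N, (L (v s i) - V (x s i) s)
        + (1 / (N:ℝ)) * ∑ i ∈ Finset.Icc 2 N, G (((1:ℝ)/N) / (x s i - x s (i - 1))))
      + (1/2) * ((1 / (N:ℝ)) * ∑ i ∈ Finset.Icc 1 N, (L (w s i) - V (y s i) s)
        + (1 / (N:ℝ)) * ∑ i ∈ Finset.Icc 2 N, G (((1:ℝ)/N) / (y s i - y s (i - 1)))) := by
    filter_upwards [hxgap, hygap, self_mem_ae_restrict measurableSet_Icc] with s hgx hgy hsmem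
    have hsum1 : ∑ i ∈ Finset.Icc 1 N, (L (u s i) - V (z s i) s + (θ/4) * (v s i - w s i) ^ 2)
        ≤ ∑ i ∈ Finset.Icc 1 N, ((1/2) * (L (v s i) - V (x s i) s)
          + (1/2) * (L (w s i) - V (y s i) s)) := by
      apply Finset.sum_le_sum
      intro i hi
      have hL := hLuc (v s i) (w s i) (1/2) (by norm_num) (by norm_num)
      have harg : (1/2 : ℝ) * v s i + (1 - 1/2) * w s i = u s i := by
        simp only [hudef]; ring
      rw [harg] at hL
      have hV := (hVconc s hsmem).2 (mem_univ (x s i)) (mem_univ (y s i))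
        (by norm_num : (0:ℝ) ≤ 1/2) (by norm_num : (0:ℝ) ≤ 1/2) (by norm_num)
      simp only [smul_eq_mul] at hV
      have hzarg : (1/2:ℝ) * x s i + (1/2) * y s i = z s i := by
        simp only [hzdef]; ring
      rw [hzarg] at hV
      nlinarith [hL, hV]
    have hsum2 : ∑ i ∈ Finset.Icc 2 N, G (((1:ℝ)/N) / (z s i - z s (i - 1)))
        ≤ ∑ i ∈ Finset.Icc 2 N, ((1/2) * G (((1:ℝ)/N) / (x s i - x s (i - 1)))
          + (1/2) * G (((1:ℝ)/N) / (y s i - y s (i - 1)))) := by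
      apply Finset.sum_le_sum
      intro i hi
      have hax : 0 < x s i - x s (i - 1) := by have := hgx i hi; linarith
      have hay : 0 < y s i - y s (i - 1) := by have := hgy i hi; linarith
      have hG := hGconv.2 (mem_Ioi.mpr hax) (mem_Ioi.mpr hay)
        (by norm_num : (0:ℝ) ≤ 1/2) (by norm_num : (0:ℝ) ≤ 1/2) (by norm_num)
      simp only [smul_eq_mul] at hG
      have harg : (1/2:ℝ) * (x s i - x s (i - 1)) + (1/2) * (y s i - y s (i - 1))
          = z s i - z s (i - 1) := by
        simp only [hzdef]; ring
      rw [harg] at hG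
      linarith
    have e0 : ∑ i ∈ Finset.Icc 1 N, (L (u s i) - V (z s i) s + (θ/4) * (v s i - w s i) ^ 2)
        = ∑ i ∈ Finset.Icc 1 N, (L (u s i) - V (z s i) s) + (θ/4) * Q s := by
      rw [Finset.sum_add_distrib, hQdef, Finset.mul_sum]
    have e2x : ∑ i ∈ Finset.Icc 1 N, ((1/2) * (L (v s i) - V (x s i) s)
          + (1/2) * (L (w s i) - V (y s i) s))
        = (1/2) * ∑ i ∈ Finset.Icc 1 N, (L (v s i) - V (x s i) s)
          + (1/2) * ∑ i ∈ Finset.Icc 1 N, (L (w s i) - V (y s i) s) := by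
      rw [Finset.sum_add_distrib, Finset.mul_sum, Finset.mul_sum]
    have e2g : ∑ i ∈ Finset.Icc 2 N, ((1/2) * G (((1:ℝ)/N) / (x s i - x s (i - 1)))
          + (1/2) * G (((1:ℝ)/N) / (y s i - y s (i - 1))))
        = (1/2) * ∑ i ∈ Finset.Icc 2 N, G (((1:ℝ)/N) / (x s i - x s (i - 1)))
          + (1/2) * ∑ i ∈ Finset.Icc 2 N, G (((1:ℝ)/N) / (y s i - y s (i - 1))) := by
      rw [Finset.sum_add_distrib, Finset.mul_sum, Finset.mul_sum]
    rw [e0] at hsum1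
    rw [e2x] at hsum1
    rw [e2g] at hsum2
    have h1N : (0:ℝ) ≤ 1/(N:ℝ) := by positivity
    have hm1 := mul_le_mul_of_nonneg_left hsum1 h1N
    have hm2 := mul_le_mul_of_nonneg_left hsum2 h1N
    have hcQ : (1/(N:ℝ)) * ((θ/4) * Q s) = c * Q s := by
      rw [hcdef]; ring
    nlinarith [hm1, hm2, hcQ]
  
  -- lower bound for the midpoint integrand
  obtain ⟨l, hldef⟩ : ∃ l : ℝ → ℝ, l = fun s => (1/(N:ℝ)) * ∑ i ∈ Finset.Icc 1 N, (L 0 - C * |u s i| - V (z s i) s)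
      + (1/(N:ℝ)) * ∑ i ∈ Finset.Icc 2 N, B i := ⟨_, rfl⟩
  have hlint : IntegrableOn l (Set.Icc 0 T) := by
    rw [hldef]
    apply Integrable.add
    · apply Integrable.const_mul
      apply integrable_finset_sum
      intro i hi
      have h1 : IntegrableOn (fun s => C * |u s i|) (Set.Icc 0 T) :=
        ((huI i hi).abs).const_mul C
      have h2 : IntegrableOn (fun s => V (z s i) s) (Set.Icc 0 T) :=
        (hVcomp _ (hzc i hi)).integrableOn_Icc
      exact ((integrable_const (L 0)).sub h1).sub h2
    · exact integrable_const _
  have hlle : ∀ᵐ s ∂(volume.restrict (Set.Icc (0:ℝ) T)), l s ≤ ((1 / (N:ℝ)) * ∑ i ∈ Finset.Icc 1 N, (L (u s i) - V (z s i) s) + (1 / (N:ℝ)) * ∑ i ∈ Finset.Icc 2 N, G (((1:ℝ)/N) / (z s i - z s (i - 1)))) := by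
    filter_upwards [hzgap, self_mem_ae_restrict measurableSet_Icc] with s hgap hsmem
    simp only [hldef]
    have h1N : (0:ℝ) ≤ 1/(N:ℝ) := by positivity
    apply add_le_add
    · apply mul_le_mul_of_nonneg_left _ h1N
      apply Finset.sum_le_sum
      intro i hi
      have := hCmin (u s i)
      linarith
    · apply mul_le_mul_of_nonneg_left _ h1N
      apply Finset.sum_le_sum
      intro i hi
      exact hB i hi s hsmem (by have := hgap i hi; linarith)
  have hup : IntegrableOn (fun s => (1/2) * ((1 / (N:ℝ)) * ∑ i ∈ Finset.Icc 1 N, (L (v s i) - V (x s i) s) + (1 / (N:ℝ)) * ∑ i ∈ Finset.Icc 2 N, G (((1:ℝ)/N) / (x s i - x s (i - 1)))) + (1/2) * ((1 / (N:ℝ)) * ∑ i ∈ Finset.Icc 1 N, (L (w s i) - V (y s i) s) + (1 / (N:ℝ)) * ∑ i ∈ Finset.Icc 2 N, G (((1:ℝ)/N) / (y s i - y s (i - 1))))) (Set.Icc 0 T) :=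
    (hxint.const_mul _).add (hyint.const_mul _)
  have hFIzint : IntegrableOn (fun s => ((1 / (N:ℝ)) * ∑ i ∈ Finset.Icc 1 N, (L (u s i) - V (z s i) s) + (1 / (N:ℝ)) * ∑ i ∈ Finset.Icc 2 N, G (((1:ℝ)/N) / (z s i - z s (i - 1))))) (Set.Icc 0 T) := by
    refine Integrable.mono' (hup.abs.add hlint.abs) hFIzm ?_
    filter_upwards [hlle, key] with s h1 h2
    rw [Real.norm_eq_abs, Pi.add_apply]
    have hQs := hQ0 s
    have hcQ : 0 ≤ c * Q s := mul_nonneg hc.le hQs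
    rw [abs_le]
    constructor
    · have h3 := neg_abs_le (l s)
      have h4 := abs_nonneg ((1/2) * ((1 / (N:ℝ)) * ∑ i ∈ Finset.Icc 1 N, (L (v s i) - V (x s i) s) + (1 / (N:ℝ)) * ∑ i ∈ Finset.Icc 2 N, G (((1:ℝ)/N) / (x s i - x s (i - 1)))) + (1/2) * ((1 / (N:ℝ)) * ∑ i ∈ Finset.Icc 1 N, (L (w s i) - V (y s i) s) + (1 / (N:ℝ)) * ∑ i ∈ Finset.Icc 2 N, G (((1:ℝ)/N) / (y s i - y s (i - 1)))))
      linarith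
    · have h3 := le_abs_self ((1/2) * ((1 / (N:ℝ)) * ∑ i ∈ Finset.Icc 1 N, (L (v s i) - V (x s i) s) + (1 / (N:ℝ)) * ∑ i ∈ Finset.Icc 2 N, G (((1:ℝ)/N) / (x s i - x s (i - 1)))) + (1/2) * ((1 / (N:ℝ)) * ∑ i ∈ Finset.Icc 1 N, (L (w s i) - V (y s i) s) + (1 / (N:ℝ)) * ∑ i ∈ Finset.Icc 2 N, G (((1:ℝ)/N) / (y s i - y s (i - 1)))))
      have h4 := abs_nonneg (l s)
      linarith
  -- values of the functional
  have hJx := Jt_eq_of N T L G V x v hxint hxgap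
  have hJy := Jt_eq_of N T L G V y w hyint hygap
  have hJz := Jt_eq_of N T L G V z u hFIzint hzgap
  have hxy : (∫ s in Set.Icc (0:ℝ) T, ((1 / (N:ℝ)) * ∑ i ∈ Finset.Icc 1 N, (L (v s i) - V (x s i) s) + (1 / (N:ℝ)) * ∑ i ∈ Finset.Icc 2 N, G (((1:ℝ)/N) / (x s i - x s (i - 1)))) : ℝ) = ∫ s in Set.Icc (0:ℝ) T, ((1 / (N:ℝ)) * ∑ i ∈ Finset.Icc 1 N, (L (w s i) - V (y s i) s) + (1 / (N:ℝ)) * ∑ i ∈ Finset.Icc 2 N, G (((1:ℝ)/N) / (y s i - y s (i - 1)))) := by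
    have h1 := hxmin y w hy
    have h2 := hymin x v hx
    rw [hJx, hJy] at h1 h2
    exact le_antisymm (by exact_mod_cast h1) (by exact_mod_cast h2)
  have hxz : (∫ s in Set.Icc (0:ℝ) T, ((1 / (N:ℝ)) * ∑ i ∈ Finset.Icc 1 N, (L (v s i) - V (x s i) s) + (1 / (N:ℝ)) * ∑ i ∈ Finset.Icc 2 N, G (((1:ℝ)/N) / (x s i - x s (i - 1)))) : ℝ) ≤ ∫ s in Set.Icc (0:ℝ) T, ((1 / (N:ℝ)) * ∑ i ∈ Finset.Icc 1 N, (L (u s i) - V (z s i) s) + (1 / (N:ℝ)) * ∑ i ∈ Finset.Icc 2 N, G (((1:ℝ)/N) / (z s i - z s (i - 1)))) := by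
    have h1 := hxmin z u hadm
    rw [hJx, hJz] at h1
    exact_mod_cast h1
  -- integrability of Q
  have hQint : Integrable Q (volume.restrict (Set.Icc (0:ℝ) T)) := by
    refine Integrable.mono' ((hup.sub hFIzint).const_mul (1/c)) hQm ?_
    filter_upwards [key] with s hs
    rw [Real.norm_eq_abs, abs_of_nonneg (hQ0 s)]
    have h1 : c * Q s ≤ ((1/2) * ((1 / (N:ℝ)) * ∑ i ∈ Finset.Icc 1 N, (L (v s i) - V (x s i) s) + (1 / (N:ℝ)) * ∑ i ∈ Finset.Icc 2 N, G (((1:ℝ)/N) / (x s i - x s (i - 1)))) + (1/2) * ((1 / (N:ℝ)) * ∑ i ∈ Finset.Icc 1 N, (L (w s i) - V (y s i) s) + (1 / (N:ℝ)) * ∑ i ∈ Finset.Icc 2 N, G (((1:ℝ)/N) / (y s i - y s (i - 1))))) - ((1 / (N:ℝ)) * ∑ i ∈ Finset.Icc 1 N, (L (u s i) - V (z s i) s) + (1 / (N:ℝ)) * ∑ i ∈ Finset.Icc 2 N, G (((1:ℝ)/N) / (z s i - z s (i - 1)))) := by linarith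
    calc Q s = (1/c) * (c * Q s) := by field_simp
      _ ≤ (1/c) * (((1/2) * ((1 / (N:ℝ)) * ∑ i ∈ Finset.Icc 1 N, (L (v s i) - V (x s i) s) + (1 / (N:ℝ)) * ∑ i ∈ Finset.Icc 2 N, G (((1:ℝ)/N) / (x s i - x s (i - 1)))) + (1/2) * ((1 / (N:ℝ)) * ∑ i ∈ Finset.Icc 1 N, (L (w s i) - V (y s i) s) + (1 / (N:ℝ)) * ∑ i ∈ Finset.Icc 2 N, G (((1:ℝ)/N) / (y s i - y s (i - 1))))) - ((1 / (N:ℝ)) * ∑ i ∈ Finset.Icc 1 N, (L (u s i) - V (z s i) s) + (1 / (N:ℝ)) * ∑ i ∈ Finset.Icc 2 N, G (((1:ℝ)/N) / (z s i - z s (i - 1))))) :=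
          mul_le_mul_of_nonneg_left h1 (by positivity)
  -- integrate the key inequality
  have hkral : (∫ s in Set.Icc (0:ℝ) T, ((1 / (N:ℝ)) * ∑ i ∈ Finset.Icc 1 N, (L (u s i) - V (z s i) s) + (1 / (N:ℝ)) * ∑ i ∈ Finset.Icc 2 N, G (((1:ℝ)/N) / (z s i - z s (i - 1))))) + c * (∫ s in Set.Icc (0:ℝ) T, Q s)
      ≤ (1/2) * (∫ s in Set.Icc (0:ℝ) T, ((1 / (N:ℝ)) * ∑ i ∈ Finset.Icc 1 N, (L (v s i) - V (x s i) s) + (1 / (N:ℝ)) * ∑ i ∈ Finset.Icc 2 N, G (((1:ℝ)/N) / (x s i - x s (i - 1))))) + (1/2) * (∫ s in Set.Icc (0:ℝ) T, ((1 / (N:ℝ)) * ∑ i ∈ Finset.Icc 1 N, (L (w s i) - V (y s i) s) + (1 / (N:ℝ)) * ∑ i ∈ Finset.Icc 2 N, G (((1:ℝ)/N) / (y s i - y s (i - 1))))) := by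
    have h1 : (∫ s in Set.Icc (0:ℝ) T, (((1 / (N:ℝ)) * ∑ i ∈ Finset.Icc 1 N, (L (u s i) - V (z s i) s) + (1 / (N:ℝ)) * ∑ i ∈ Finset.Icc 2 N, G (((1:ℝ)/N) / (z s i - z s (i - 1)))) + c * Q s))
        ≤ ∫ s in Set.Icc (0:ℝ) T, ((1/2) * ((1 / (N:ℝ)) * ∑ i ∈ Finset.Icc 1 N, (L (v s i) - V (x s i) s) + (1 / (N:ℝ)) * ∑ i ∈ Finset.Icc 2 N, G (((1:ℝ)/N) / (x s i - x s (i - 1)))) + (1/2) * ((1 / (N:ℝ)) * ∑ i ∈ Finset.Icc 1 N, (L (w s i) - V (y s i) s) + (1 / (N:ℝ)) * ∑ i ∈ Finset.Icc 2 N, G (((1:ℝ)/N) / (y s i - y s (i - 1))))) :=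
      integral_mono_ae (hFIzint.add (hQint.const_mul c)) hup key
    rw [integral_add hFIzint (hQint.const_mul c), integral_const_mul] at h1
    rw [integral_add (hxint.const_mul _) (hyint.const_mul _), integral_const_mul,
      integral_const_mul] at h1
    exact h1
  have hQI0 : (∫ s in Set.Icc (0:ℝ) T, Q s) = 0 := by
    have hnn : 0 ≤ ∫ s in Set.Icc (0:ℝ) T, Q s := integral_nonneg fun s => hQ0 s
    have hle : c * (∫ s in Set.Icc (0:ℝ) T, Q s) ≤ 0 := by linarith
    nlinarith
  have hQae := (integral_eq_zero_iff_of_nonneg_ae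
    (Filter.Eventually.of_forall fun s => hQ0 s) hQint).mp hQI0
  -- velocities agree a.e.
  have hvw : ∀ᵐ s ∂volume, s ∈ Set.Icc (0:ℝ) T → ∀ i ∈ Finset.Icc 1 N, v s i = w s i := by
    rw [← ae_restrict_iff' measurableSet_Icc]
    filter_upwards [hQae] with s hs i hi
    have hs' : (∑ j ∈ Finset.Icc 1 N, (v s j - w s j) ^ 2) = 0 := by
      simpa [hQdef] using hs
    have h0 : (v s i - w s i) ^ 2 = 0 :=
      (Finset.sum_eq_zero_iff_of_nonneg (fun j _ => sq_nonneg (v s j - w s j))).mp hs' i hi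
    have := pow_eq_zero_iff (by norm_num : (2:ℕ) ≠ 0) |>.mp h0
    linarith
  intro t ht i hi
  have hIv : (∫ s in (0:ℝ)..t, v s i) = ∫ s in (0:ℝ)..t, w s i := by
    apply intervalIntegral.integral_congr_ae
    filter_upwards [hvw] with s hs hsmem
    rw [Set.uIoc_of_le ht.1] at hsmem
    exact hs ⟨hsmem.1.le, hsmem.2.trans ht.2⟩ i hi
  rw [hxeq i hi t ht, hyeq i hi t ht, hIv]
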